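/- Let M be a compact metric space, λ a finite Borel measure on M with λ(M) > 0, and p ∈ (1, ∞). Let f, ξ ∈ C(M; ℝ), let I ⊆ ℝ be an open interval, and let τ : I → ℝ be twice differentiable such that f(x) + τ(t)·ξ(x) > 0 for all t ∈ I and x ∈ M, and such that τ″(t) = 2·( ∫_M (f + τ(t)ξ)^{p−1}·ξ dλ / ∫_M (f + τ(t)ξ)^p dλ )·τ′(t)² for all t ∈ I. Then the curve γ : I → L^p(λ) defined by γ(t) = (f + τ(t)·ξ)/‖f + τ(t)·ξ‖_{L^p(λ)} is twice differentiable as a curve in the Banach space L^p(λ), satisfies ‖γ(t)‖_{L^p(λ)} = 1 for all t, and for every t ∈ I there exists c(t) ∈ ℝ such that γ″(t) = c(t)·γ(t). -/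

import Mathlib

open MeasureTheory

private lemma aux_compactIntegrable {M : Type*} [MetricSpace M] [CompactSpace M]
    [MeasurableSpace M] [BorelSpace M] (lam : Measure M) [IsFiniteMeasure lam]
    {g : M → ℝ} (hg : Continuous g) : Integrable g lam :=
  hg.integrable_of_hasCompactSupport (IsCompact.of_isClosed_subset isCompact_univ
    (isClosed_tsupport g) (Set.subset_univ _))

private lemma aux_min {M : Type*} [MetricSpace M] [CompactSpace M] [Nonempty M]
    {g : M → ℝ} (hg : Continuous g) : ∃ x₀, ∀ y, g x₀ ≤ g y := by
  obtain ⟨x₀, -, hx₀⟩ := isCompact_univ.exists_isMinOn Set.univ_nonempty hg.continuousOn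
  exact ⟨x₀, fun y => isMinOn_iff.mp hx₀ y (Set.mem_univ y)⟩

private lemma aux_max {M : Type*} [MetricSpace M] [CompactSpace M] [Nonempty M]
    {g : M → ℝ} (hg : Continuous g) : ∃ x₀, ∀ y, g y ≤ g x₀ := by
  obtain ⟨x₀, -, hx₀⟩ := isCompact_univ.exists_isMaxOn Set.univ_nonempty hg.continuousOn
  exact ⟨x₀, fun y => isMaxOn_iff.mp hx₀ y (Set.mem_univ y)⟩

private lemma aux_hasDerivAt {M : Type*} [MetricSpace M] [CompactSpace M]
    [MeasurableSpace M] [BorelSpace M] [Nonempty M] (lam : Measure M) [IsFiniteMeasure lam]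
    {f ξ w : M → ℝ} (hf : Continuous f) (hξ : Continuous ξ) (hw : Continuous w)
    (q : ℝ) (s₀ : ℝ) (hpos : ∀ x, 0 < f x + s₀ * ξ x) :
    HasDerivAt (fun s => ∫ x, (f x + s * ξ x) ^ q * w x ∂lam)
      (∫ x, ξ x * q * (f x + s₀ * ξ x) ^ (q - 1) * w x ∂lam) s₀ := by
  have hcont : Continuous fun x => f x + s₀ * ξ x := hf.add (continuous_const.mul hξ)
  obtain ⟨xδ, hδ⟩ := aux_min hcont
  set δ := f xδ + s₀ * ξ xδ with hδdef
  have hδpos : 0 < δ := hpos xδ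
  obtain ⟨xC, hC⟩ := aux_max hξ.abs
  set Cξ := |ξ xC| with hCdef
  have hCξ0 : 0 ≤ Cξ := abs_nonneg _
  obtain ⟨xK, hK⟩ := aux_max hcont
  set K := f xK + s₀ * ξ xK with hKdef
  have hδK : δ ≤ K := hδ xK
  obtain ⟨xW, hW⟩ := aux_max hw.abs
  set CW := |w xW| with hWdef
  have hCW0 : 0 ≤ CW := abs_nonneg _
  set ε := δ / (2 * (Cξ + 1)) with hεdef
  have hε : 0 < ε := by positivity
  have hεC : ε * (Cξ + 1) = δ / 2 := by
    rw [hεdef]; field_simp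
  have hball : ∀ s ∈ Metric.ball s₀ ε, ∀ x, δ/2 ≤ f x + s * ξ x ∧ f x + s * ξ x ≤ K + δ/2 := by
    intro s hs x
    have h1 : |s - s₀| < ε := by rwa [Metric.mem_ball, Real.dist_eq] at hs
    have h2 : |(s - s₀) * ξ x| ≤ δ/2 := by
      rw [abs_mul, ← hεC]
      exact mul_le_mul h1.le (by linarith [hC x]) (abs_nonneg _) hε.le
    have h3 := abs_le.mp h2
    have key : f x + s * ξ x = (f x + s₀ * ξ x) + (s - s₀) * ξ x := by ring
    have h4 := hδ x; have h5 := hK x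
    constructor <;> (rw [key]; linarith)
  have hballpos : ∀ s ∈ Metric.ball s₀ ε, ∀ x, 0 < f x + s * ξ x := fun s hs x =>
    lt_of_lt_of_le (by positivity) (hball s hs x).1
  set mx := max ((δ/2) ^ (q-1)) ((K + δ/2) ^ (q-1)) with hmxdef
  have hmx0 : 0 ≤ mx := le_trans (Real.rpow_nonneg (by positivity) _) (le_max_left _ _)
  have key := hasDerivAt_integral_of_dominated_loc_of_deriv_le (μ := lam)
    (F := fun s x => (f x + s * ξ x) ^ q * w x)
    (F' := fun s x => ξ x * q * (f x + s * ξ x) ^ (q - 1) * w x)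
    (x₀ := s₀) (bound := fun _ => Cξ * |q| * mx * CW) (Metric.ball_mem_nhds s₀ hε) ?_ ?_ ?_ ?_ ?_ ?_
  · exact key.2
  · filter_upwards [Metric.ball_mem_nhds s₀ hε] with s hs
    exact (((hf.add (continuous_const.mul hξ)).rpow_const
      (fun x => Or.inl (hballpos s hs x).ne')).mul hw).aestronglyMeasurable
  · exact aux_compactIntegrable lam ((hcont.rpow_const
      (fun x => Or.inl (hpos x).ne')).mul hw)
  · exact (((hξ.mul continuous_const).mul (hcont.rpow_const
      (fun x => Or.inl (hpos x).ne'))).mul hw).aestronglyMeasurable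
  · refine Filter.Eventually.of_forall fun x s hs => ?_
    have hb := hball s hs x
    have hbpos := hballpos s hs x
    have hpow : (f x + s * ξ x) ^ (q-1) ≤ mx := by
      rcases le_or_gt 0 (q-1) with h | h
      · exact le_max_of_le_right (Real.rpow_le_rpow hbpos.le hb.2 h)
      · exact le_max_of_le_left (Real.rpow_le_rpow_of_nonpos (by positivity) hb.1 h.le)
    rw [Real.norm_eq_abs, abs_mul, abs_mul, abs_mul,
      abs_of_nonneg (Real.rpow_nonneg hbpos.le _)]
    have hq0 : (0:ℝ) ≤ |q| := abs_nonneg q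
    apply mul_le_mul _ (hW x) (abs_nonneg _) (by positivity)
    apply mul_le_mul _ hpow (Real.rpow_nonneg hbpos.le _) (by positivity)
    exact mul_le_mul (hC x) le_rfl hq0 hCξ0
  · exact integrable_const _
  · refine Filter.Eventually.of_forall fun x s hs => ?_
    have hbpos := hballpos s hs x
    have h1 : HasDerivAt (fun s : ℝ => f x + s * ξ x) (ξ x) s := by
      simpa using ((hasDerivAt_id s).mul_const (ξ x)).const_add (f x)
    exact (h1.rpow_const (Or.inl hbpos.ne')).mul_const (w x)

private lemma aux_int_pos {M : Type*} [MetricSpace M] [CompactSpace M]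
    [MeasurableSpace M] [BorelSpace M] [Nonempty M] (lam : Measure M) [IsFiniteMeasure lam]
    (hlam : 0 < lam Set.univ) {g : M → ℝ} (hg : Continuous g) (h : ∀ x, 0 < g x) :
    0 < ∫ x, g x ∂lam := by
  obtain ⟨x₀, hx₀⟩ := aux_min hg
  have h1 : 0 < (lam Set.univ).toReal := ENNReal.toReal_pos hlam.ne' (measure_ne_top _ _)
  calc (0:ℝ) < (lam Set.univ).toReal • g x₀ := by
        rw [smul_eq_mul]; exact mul_pos h1 (h x₀)
    _ = ∫ _x, g x₀ ∂lam := (integral_const _).symm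
    _ ≤ ∫ x, g x ∂lam :=
        integral_mono (integrable_const _) (aux_compactIntegrable lam hg) hx₀

/-- Explicit solution of the geodesic equation of the projection connection on the unit
sphere of `L^p(λ)`: if `τ` solves the reparametrization ODE, then the normalized curve
`γ(t) = (f + τ(t)·ξ)/‖f + τ(t)·ξ‖_{L^p}` is a twice differentiable curve in `L^p(λ)` of
unit norm whose second derivative is everywhere parallel to `γ`. -/
theorem stmt_17 {M : Type*} [MetricSpace M] [CompactSpace M] [MeasurableSpace M] [BorelSpace M]
    (lam : Measure M) [IsFiniteMeasure lam] (hlam : 0 < lam Set.univ)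
    (p : ℝ) (hp : 1 < p) [Fact (1 ≤ ENNReal.ofReal p)]
    (f ξ : M → ℝ) (hf : Continuous f) (hξ : Continuous ξ)
    (I : Set ℝ) (hIopen : IsOpen I) (hIconv : Convex ℝ I)
    (τ : ℝ → ℝ)
    (hτ1 : ∀ t ∈ I, DifferentiableAt ℝ τ t)
    (hτ2 : ∀ t ∈ I, DifferentiableAt ℝ (deriv τ) t)
    (hpos : ∀ t ∈ I, ∀ x, 0 < f x + τ t * ξ x)
    (hODE : ∀ t ∈ I, deriv (deriv τ) t
      = 2 * ((∫ x, (f x + τ t * ξ x) ^ (p - 1) * ξ x ∂lam)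
          / (∫ x, (f x + τ t * ξ x) ^ p ∂lam)) * (deriv τ t) ^ 2) :
    ∃ γ γ' γ'' : ℝ → Lp ℝ (ENNReal.ofReal p) lam,
      (∀ t ∈ I, ⇑(γ t) =ᵐ[lam]
        fun x => (f x + τ t * ξ x) / (∫ y, |f y + τ t * ξ y| ^ p ∂lam) ^ (1 / p)) ∧
      (∀ t ∈ I, HasDerivAt γ (γ' t) t) ∧
      (∀ t ∈ I, HasDerivAt γ' (γ'' t) t) ∧
      (∀ t ∈ I, ‖γ t‖ = 1) ∧
      (∀ t ∈ I, ∃ c : ℝ, γ'' t = c • γ t) := by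
  have hM : Nonempty M := by
    by_contra hne
    rw [not_nonempty_iff] at hne
    rw [Set.univ_eq_empty_iff.mpr hne, measure_empty] at hlam
    exact lt_irrefl _ hlam
  have hp0 : 0 < p := zero_lt_one.trans hp
  set P := ENNReal.ofReal p with hPdef
  have hP0 : P ≠ 0 := by
    simp only [hPdef, ne_eq, ENNReal.ofReal_eq_zero, not_le]; exact hp0
  have hPtop : P ≠ ⊤ := ENNReal.ofReal_ne_top
  have hPreal : P.toReal = p := ENNReal.toReal_ofReal hp0.le
  set gL : Lp ℝ P lam := ContinuousMap.toLp (E := ℝ) P lam ℝ ⟨f, hf⟩ with hgLdef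
  set hL : Lp ℝ P lam := ContinuousMap.toLp (E := ℝ) P lam ℝ ⟨ξ, hξ⟩ with hhLdef
  have hgcoe : ⇑gL =ᵐ[lam] f := ContinuousMap.coeFn_toLp lam (⟨f, hf⟩ : C(M, ℝ))
  have hhcoe : ⇑hL =ᵐ[lam] ξ := ContinuousMap.coeFn_toLp lam (⟨ξ, hξ⟩ : C(M, ℝ))
  set A : ℝ → ℝ := fun t => ∫ x, (f x + τ t * ξ x) ^ p ∂lam with hAdef
  set B : ℝ → ℝ := fun t => ∫ x, (f x + τ t * ξ x) ^ (p - 1) * ξ x ∂lam with hBdef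
  have hcont : Continuous fun x => f x + τ 0 * ξ x := hf.add (continuous_const.mul hξ)
  have hApos : ∀ t ∈ I, 0 < A t := by
    intro t ht
    exact aux_int_pos lam hlam
      ((hf.add (continuous_const.mul hξ)).rpow_const fun x => Or.inl (hpos t ht x).ne')
      (fun x => Real.rpow_pos_of_pos (hpos t ht x) p)
  have hA : ∀ t ∈ I, HasDerivAt A (p * B t * deriv τ t) t := by
    intro t ht
    have h1 := aux_hasDerivAt lam hf hξ (continuous_const : Continuous fun _ : M => (1:ℝ))
      p (τ t) (hpos t ht)
    have h2 := HasDerivAt.comp t h1 ((hτ1 t ht).hasDerivAt)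
    have h3 : A = (fun s => ∫ x, (f x + s * ξ x) ^ p * 1 ∂lam) ∘ τ := by
      funext u; simp [hAdef, Function.comp]
    rw [h3]
    refine h2.congr_deriv ?_
    simp only [hBdef, mul_one]
    rw [← integral_const_mul p]
    rw [show (∫ x, p * ((f x + τ t * ξ x) ^ (p-1) * ξ x) ∂lam)
        = ∫ x, ξ x * p * (f x + τ t * ξ x) ^ (p - 1) ∂lam from
      integral_congr_ae (Filter.Eventually.of_forall fun x => by ring)]
  have hBd : ∀ t ∈ I, HasDerivAt B
      ((∫ x, ξ x * (p-1) * (f x + τ t * ξ x) ^ (p - 1 - 1) * ξ x ∂lam) * deriv τ t) t := by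
    intro t ht
    have h1 := aux_hasDerivAt lam hf hξ hξ (p-1) (τ t) (hpos t ht)
    have h2 := HasDerivAt.comp t h1 ((hτ1 t ht).hasDerivAt)
    have h3 : B = (fun s => ∫ x, (f x + s * ξ x) ^ (p-1) * ξ x ∂lam) ∘ τ := by
      funext u; simp [hBdef, Function.comp]
    rw [h3]
    exact h2
  set c : ℝ → ℝ := fun t => A t ^ (-(1/p)) with hcdef
  set c' : ℝ → ℝ := fun t => p * B t * deriv τ t * -(1/p) * A t ^ (-(1/p) - 1) with hc'def
  have hc : ∀ t ∈ I, HasDerivAt c (c' t) t := fun t ht =>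
    (hA t ht).rpow_const (Or.inl (hApos t ht).ne')
  have hc'diff : ∀ t ∈ I, DifferentiableAt ℝ c' t := by
    intro t ht
    have h1 : DifferentiableAt ℝ A t := (hA t ht).differentiableAt
    have h2 : DifferentiableAt ℝ B t := (hBd t ht).differentiableAt
    have h3 : DifferentiableAt ℝ (deriv τ) t := hτ2 t ht
    have h4 : DifferentiableAt ℝ (fun t => A t ^ (-(1/p) - 1)) t :=
      h1.rpow_const (Or.inl (hApos t ht).ne')
    exact ((((differentiableAt_const p).mul h2).mul h3).mul_const _).mul h4
  set c'' : ℝ → ℝ := fun t => deriv c' t with hc''def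
  have hc' : ∀ t ∈ I, HasDerivAt c' (c'' t) t := fun t ht => (hc'diff t ht).hasDerivAt
  set d : ℝ → ℝ := fun t => τ t * c t with hddef
  set d' : ℝ → ℝ := fun t => deriv τ t * c t + τ t * c' t with hd'def
  set d'' : ℝ → ℝ := fun t =>
    deriv (deriv τ) t * c t + deriv τ t * c' t + (deriv τ t * c' t + τ t * c'' t) with hd''def
  have hd : ∀ t ∈ I, HasDerivAt d (d' t) t := fun t ht =>
    (hτ1 t ht).hasDerivAt.mul (hc t ht)
  have hd' : ∀ t ∈ I, HasDerivAt d' (d'' t) t := fun t ht =>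
    ((hτ2 t ht).hasDerivAt.mul (hc t ht)).add ((hτ1 t ht).hasDerivAt.mul (hc' t ht))
  have hcpos : ∀ t ∈ I, 0 < c t := fun t ht => Real.rpow_pos_of_pos (hApos t ht) _
  refine ⟨fun t => c t • gL + d t • hL, fun t => c' t • gL + d' t • hL,
    fun t => c'' t • gL + d'' t • hL, ?_, ?_, ?_, ?_, ?_⟩
  · -- a.e. representation
    intro t ht
    have hIA : (∫ y, |f y + τ t * ξ y| ^ p ∂lam) = A t := by
      simp only [hAdef]
      exact integral_congr_ae (Filter.Eventually.of_forall fun y => by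
        simp only [abs_of_pos (hpos t ht y)])
    filter_upwards [Lp.coeFn_add (c t • gL) (d t • hL), Lp.coeFn_smul (c t) gL,
      Lp.coeFn_smul (d t) hL, hgcoe, hhcoe] with x e1 e2 e3 e4 e5
    rw [e1, Pi.add_apply, e2, e3, Pi.smul_apply, Pi.smul_apply, e4, e5, smul_eq_mul,
      smul_eq_mul, hIA, div_eq_mul_inv, ← Real.rpow_neg (hApos t ht).le]
    simp only [hcdef, hddef]
    ring
  · intro t ht
    exact ((hc t ht).smul_const gL).add ((hd t ht).smul_const hL)
  · intro t ht
    exact ((hc' t ht).smul_const gL).add ((hd' t ht).smul_const hL)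
  · -- unit norm
    intro t ht
    have hvcoe : ⇑(gL + τ t • hL) =ᵐ[lam] fun x => f x + τ t * ξ x := by
      filter_upwards [Lp.coeFn_add gL (τ t • hL), Lp.coeFn_smul (τ t) hL, hgcoe, hhcoe]
        with x e1 e2 e3 e4
      rw [e1, Pi.add_apply, e2, Pi.smul_apply, e3, e4, smul_eq_mul]
    have hu : MemLp (fun x => f x + τ t * ξ x) P lam := (Lp.memLp _).ae_eq hvcoe
    have hsplit : c t • gL + d t • hL = c t • (gL + τ t • hL) := by
      simp only [hddef]
      rw [smul_add, smul_smul, mul_comm (c t) (τ t)]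
    have h2 : ‖(gL + τ t • hL : Lp ℝ P lam)‖ = (A t) ^ (1/p) := by
      rw [Lp.norm_def, eLpNorm_congr_ae hvcoe,
        MemLp.eLpNorm_eq_integral_rpow_norm hP0 hPtop hu,
        ENNReal.toReal_ofReal (Real.rpow_nonneg (integral_nonneg fun x =>
          Real.rpow_nonneg (norm_nonneg _) _) _), hPreal, one_div]
      congr 1
      simp only [hAdef]
      exact integral_congr_ae (Filter.Eventually.of_forall fun x => by
        simp only [Real.norm_eq_abs, abs_of_pos (hpos t ht x)])
    show ‖c t • gL + d t • hL‖ = 1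
    rw [hsplit, norm_smul, Real.norm_eq_abs, abs_of_pos (hcpos t ht), h2]
    simp only [hcdef]
    rw [← Real.rpow_add (hApos t ht), neg_add_cancel, Real.rpow_zero]
  · -- parallelism
    intro t ht
    have hc0 : c t ≠ 0 := (hcpos t ht).ne'
    have hA0 : A t ≠ 0 := (hApos t ht).ne'
    have hODEt := hODE t ht
    have hArw : (∫ x, (f x + τ t * ξ x) ^ p ∂lam) = A t := by simp only [hAdef]
    have hBrw : (∫ x, (f x + τ t * ξ x) ^ (p-1) * ξ x ∂lam) = B t := by simp only [hBdef]
    rw [hArw, hBrw] at hODEt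
    have hrpow : A t ^ (-(1/p)) = A t ^ (-(1/p) - 1) * A t := by
      rw [← Real.rpow_add_one hA0]
      congr 1
      ring
    have hkey : deriv (deriv τ) t * c t + 2 * (deriv τ t * c' t) = 0 := by
      simp only [hcdef, hc'def]
      rw [hODEt, hrpow]
      field_simp
      ring
    have hd''eq : d'' t = τ t * c'' t := by
      simp only [hd''def]; linarith [hkey]
    refine ⟨c'' t / c t, ?_⟩
    show c'' t • gL + d'' t • hL = (c'' t / c t) • (c t • gL + d t • hL)
    rw [smul_add, smul_smul, smul_smul, div_mul_cancel₀ _ hc0]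
    congr 1
    rw [hd''eq]
    simp only [hddef]
    congr 1
    field_simp
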